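/- Let A be a locally noetherian Grothendieck abelian category equipped with a symmetric monoidal structure whose tensor product is right exact in each variable. Let a be a subobject of the unit object 𝟙 (an ideal); for n ≥ 0 let a^n ⊆ 𝟙 be the image of a^{⊗n} → 𝟙, and for an object M let a^n M ⊆ M be the image of a^n ⊗ M → 𝟙 ⊗ M ≅ M. Let B be the full subcategory of A consisting of objects that are locally annihilated by a power of a (objects M equal to the union of their subobjects N with a^k N = 0 for some k). Assume the Artin–Rees condition (∗∗): for every noetherian object M and every subobject N ⊆ M there exists r such that a^n M ∩ N = a^{n−r}(a^r M ∩ N) for all n ≥ r. Then for every noetherian object M of A there exists a subobject M₀ ⊆ M such that M/M₀ belongs to B and M₀ has no nonzero subobject belonging to B (condition (∗) holds for B). -/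

import Mathlib

/-!
STATEMENT 12. Let `A` be a locally noetherian Grothendieck abelian category
with a symmetric monoidal structure whose tensor product is right exact in each
variable.  Let `a` be a subobject of the unit object `𝟙` (an ideal); for
`n ≥ 0` let `a^n ⊆ 𝟙` be the image of `a^{⊗n} → 𝟙`, and for an object `M` and
a subobject `K ⊆ M` let `a^n K ⊆ M` be the image of `a^n ⊗ K → 𝟙 ⊗ M ≅ M`.
Let `B` consist of the objects locally annihilated by a power of `a` (objects
equal to the union of their subobjects `N` with `a^k N = 0` for some `k`).
Assume the Artin–Rees condition (∗∗): for every noetherian object `M` and every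
subobject `N ⊆ M` there is `r` with `a^n M ⊓ N = a^{n−r}(a^r M ⊓ N)` for all
`n ≥ r`.  Then for every noetherian object `M` there is a subobject `M₀ ⊆ M`
with `M/M₀ ∈ B` and `M₀` having no nonzero subobject in `B` (condition (∗)).
-/

open CategoryTheory Limits MonoidalCategory

universe v u

variable {A : Type u} [Category.{v} A] [Abelian A] [MonoidalCategory A]

/-- The `n`-th power `a^n ⊆ 𝟙` of an ideal `a ⊆ 𝟙`: the image of the map
`a^{⊗n} → 𝟙`. -/
noncomputable def idealPow (a : Subobject (𝟙_ A)) : ℕ → Subobject (𝟙_ A)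
  | 0 => ⊤
  | n + 1 => imageSubobject ((a.arrow ⊗ₘ (idealPow a n).arrow) ≫ (λ_ (𝟙_ A)).hom)

/-- For a subobject `K ⊆ M`, the subobject `a^n K ⊆ M`: the image of
`a^n ⊗ K → 𝟙 ⊗ M ≅ M`. -/
noncomputable def idealSMul (a : Subobject (𝟙_ A)) (n : ℕ) {M : A}
    (K : Subobject M) : Subobject M :=
  imageSubobject (((idealPow a n).arrow ⊗ₘ K.arrow) ≫ (λ_ M).hom)

variable [HasColimits A] [HasLimits A] [WellPowered.{v} A]

noncomputable instance (M : A) : SupSet (Subobject M) :=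
  (Subobject.instCompleteLattice.{v} (B := M)).toSupSet

/-- `M` is locally annihilated by a power of `a`: it is the union of its
subobjects `N` with `a^k N = 0` for some `k`. -/
noncomputable def locallyTorsion (a : Subobject (𝟙_ A)) (M : A) : Prop :=
  (⨆ (N : Subobject M) (_ : ∃ k : ℕ, idealSMul a k N = (⊥ : Subobject M)), N)
    = (⊤ : Subobject M)

section AuxLemmas

lemma aux_imageSubobject_congr {X Y : A} {f g : X ⟶ Y} (h : f = g) :
    imageSubobject f = imageSubobject g := by subst h; rfl

/-- Precomposing with an epimorphism does not change the image subobject. -/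
lemma aux_imageSubobject_comp_epi {X' X Y : A} (h : X' ⟶ X) [Epi h] (f : X ⟶ Y) :
    imageSubobject (h ≫ f) = imageSubobject f := by
  haveI : IsIso (Subobject.ofLE _ _ (imageSubobject_comp_le h f)) := isIso_of_mono_of_epi _
  exact Subobject.eq_of_comm (asIso (Subobject.ofLE _ _ (imageSubobject_comp_le h f)))
    (Subobject.ofLE_arrow _)

lemma aux_smul_eq_bot_iff (a : Subobject (𝟙_ A)) (n : ℕ) {M : A} (K : Subobject M) :
    idealSMul a n K = ⊥ ↔ ((idealPow a n).arrow ⊗ₘ K.arrow) ≫ (λ_ M).hom = 0 := by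
  constructor
  · intro h
    simp only [idealSMul] at h
    have h2 : (imageSubobject (((idealPow a n).arrow ⊗ₘ K.arrow) ≫ (λ_ M).hom)).arrow
        = Subobject.ofLE _ _ (le_of_eq h) ≫ (⊥ : Subobject M).arrow :=
      (Subobject.ofLE_arrow _).symm
    calc ((idealPow a n).arrow ⊗ₘ K.arrow) ≫ (λ_ M).hom
        = factorThruImageSubobject _ ≫
            (imageSubobject (((idealPow a n).arrow ⊗ₘ K.arrow) ≫ (λ_ M).hom)).arrow :=
          (imageSubobject_arrow_comp _).symm
      _ = 0 := by rw [h2, Subobject.bot_arrow, comp_zero, comp_zero]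
  · intro h
    simp only [idealSMul]
    rw [aux_imageSubobject_congr h]
    exact imageSubobject_zero

lemma aux_smul_mono_right (a : Subobject (𝟙_ A)) (n : ℕ) {M : A} {K₁ K₂ : Subobject M}
    (h : K₁ ≤ K₂) : idealSMul a n K₁ ≤ idealSMul a n K₂ := by
  have e : (((idealPow a n).arrow ⊗ₘ K₁.arrow) ≫ (λ_ M).hom)
      = (𝟙 _ ⊗ₘ Subobject.ofLE _ _ h) ≫ (((idealPow a n).arrow ⊗ₘ K₂.arrow) ≫ (λ_ M).hom) := by
    rw [← Category.assoc, tensorHom_comp_tensorHom, Category.id_comp, Subobject.ofLE_arrow]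
  simp only [idealSMul]
  rw [aux_imageSubobject_congr e]
  exact imageSubobject_comp_le _ _

lemma aux_smul_mono_left (a : Subobject (𝟙_ A)) {m n : ℕ}
    (hpow : idealPow a n ≤ idealPow a m) {M : A} (K : Subobject M) :
    idealSMul a n K ≤ idealSMul a m K := by
  have e : (((idealPow a n).arrow ⊗ₘ K.arrow) ≫ (λ_ M).hom)
      = (Subobject.ofLE _ _ hpow ⊗ₘ 𝟙 _) ≫ (((idealPow a m).arrow ⊗ₘ K.arrow) ≫ (λ_ M).hom) := by
    rw [← Category.assoc, tensorHom_comp_tensorHom, Category.id_comp, Subobject.ofLE_arrow]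
  simp only [idealSMul]
  rw [aux_imageSubobject_congr e]
  exact imageSubobject_comp_le _ _

lemma aux_pow_succ_le (a : Subobject (𝟙_ A)) (n : ℕ) :
    idealPow a (n + 1) ≤ idealPow a n := by
  simp only [idealPow]
  refine imageSubobject_le _ ((a.arrow ⊗ₘ 𝟙 _) ≫ (λ_ _).hom) ?_
  rw [Category.assoc, ← MonoidalCategory.leftUnitor_naturality,
    ← MonoidalCategory.id_tensorHom, ← Category.assoc, tensorHom_comp_tensorHom,
    Category.comp_id, Category.id_comp]

lemma aux_pow_antitone (a : Subobject (𝟙_ A)) (m n : ℕ) (h : m ≤ n) :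
    idealPow a n ≤ idealPow a m := by
  induction n with
  | zero =>
    obtain rfl : m = 0 := Nat.le_zero.mp h
    exact le_refl _
  | succ n ih =>
    rcases Nat.lt_or_ge m (n + 1) with h' | h'
    · exact (aux_pow_succ_le a n).trans (ih (Nat.lt_succ_iff.mp h'))
    · obtain rfl : m = n + 1 := le_antisymm h h'
      exact le_refl _

lemma aux_smul_bot [∀ X : A, PreservesFiniteColimits (tensorLeft X)]
    (a : Subobject (𝟙_ A)) (k : ℕ) (M : A) :
    idealSMul a k (⊥ : Subobject M) = ⊥ := by
  rw [aux_smul_eq_bot_iff]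
  haveI : Mono (0 : ((⊥ : Subobject M) : A) ⟶ M) := by
    rw [← Subobject.bot_arrow]; infer_instance
  have hz : IsZero ((⊥ : Subobject M) : A) := IsZero.of_mono_zero _ M
  have hinit : IsInitial ((tensorLeft ((idealPow a k : A))).obj ((⊥ : Subobject M) : A)) :=
    hz.isInitial.isInitialObj _
  have hz2 : IsZero (((idealPow a k : A)) ⊗ ((⊥ : Subobject M) : A)) :=
    (isZero_zero A).of_iso ((isZero_zero A).isoIsInitial hinit).symm
  exact hz2.eq_zero_of_src _

lemma aux_sup_eq_imageSubobject {M : A} (K₁ K₂ : Subobject M) :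
    imageSubobject (coprod.desc K₁.arrow K₂.arrow) = K₁ ⊔ K₂ := by
  refine le_antisymm ?_ (sup_le ?_ ?_)
  · refine imageSubobject_le _
      (coprod.desc (Subobject.ofLE _ _ le_sup_left) (Subobject.ofLE _ _ le_sup_right)) ?_
    apply coprod.hom_ext <;> simp [Subobject.ofLE_arrow]
  · exact Subobject.le_of_comm (coprod.inl ≫ factorThruImageSubobject _) (by simp; exact coprod.inl_desc _ _)
  · exact Subobject.le_of_comm (coprod.inr ≫ factorThruImageSubobject _) (by simp; exact coprod.inr_desc _ _)

lemma aux_image_sup_le [∀ X : A, PreservesFiniteColimits (tensorLeft X)]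
    {P : A} (q : P ⟶ 𝟙_ A) {M : A} (K₁ K₂ : Subobject M) :
    imageSubobject ((q ⊗ₘ (K₁ ⊔ K₂).arrow) ≫ (λ_ M).hom)
      ≤ imageSubobject ((q ⊗ₘ K₁.arrow) ≫ (λ_ M).hom)
        ⊔ imageSubobject ((q ⊗ₘ K₂.arrow) ≫ (λ_ M).hom) := by
  have himg := aux_sup_eq_imageSubobject K₁ K₂
  set d : ((K₁ : A) ⨿ (K₂ : A)) ⟶ M := coprod.desc K₁.arrow K₂.arrow with hd
  set e : ((K₁ : A) ⨿ (K₂ : A)) ⟶ ((K₁ ⊔ K₂ : Subobject M) : A) :=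
    factorThruImageSubobject d ≫ (Subobject.isoOfEq _ _ himg).hom with he
  have hearrow : e ≫ (K₁ ⊔ K₂).arrow = d := by
    rw [he, Category.assoc, Subobject.isoOfEq_hom, Subobject.ofLE_arrow,
      imageSubobject_arrow_comp]
  haveI hEpi : Epi e := by rw [he]; exact epi_comp _ _
  haveI : Epi (𝟙 P ⊗ₘ e) := by
    rw [MonoidalCategory.id_tensorHom]
    exact (tensorLeft P).map_epi e
  have key : imageSubobject ((q ⊗ₘ (K₁ ⊔ K₂).arrow) ≫ (λ_ M).hom)
      = imageSubobject ((q ⊗ₘ d) ≫ (λ_ M).hom) := by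
    rw [← aux_imageSubobject_comp_epi (𝟙 P ⊗ₘ e) ((q ⊗ₘ (K₁ ⊔ K₂).arrow) ≫ (λ_ M).hom)]
    apply aux_imageSubobject_congr
    rw [← Category.assoc, tensorHom_comp_tensorHom, Category.id_comp, hearrow]
  rw [key]
  refine imageSubobject_le _
    (inv (coprodComparison (tensorLeft P) ((K₁ : A)) ((K₂ : A))) ≫
      coprod.desc
        (factorThruImageSubobject ((q ⊗ₘ K₁.arrow) ≫ (λ_ M).hom) ≫
          Subobject.ofLE _ _ le_sup_left)
        (factorThruImageSubobject ((q ⊗ₘ K₂.arrow) ≫ (λ_ M).hom) ≫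
          Subobject.ofLE _ _ le_sup_right)) ?_
  rw [Category.assoc, IsIso.inv_comp_eq]
  apply coprod.hom_ext
  · rw [coprod.inl_desc_assoc, Category.assoc, Subobject.ofLE_arrow,
      imageSubobject_arrow_comp, ← Category.assoc, coprodComparison_inl,
      MonoidalCategory.curriedTensor_obj_map, ← MonoidalCategory.id_tensorHom,
      ← Category.assoc, tensorHom_comp_tensorHom, Category.id_comp, hd, coprod.inl_desc]
  · rw [coprod.inr_desc_assoc, Category.assoc, Subobject.ofLE_arrow,
      imageSubobject_arrow_comp, ← Category.assoc, coprodComparison_inr,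
      MonoidalCategory.curriedTensor_obj_map, ← MonoidalCategory.id_tensorHom,
      ← Category.assoc, tensorHom_comp_tensorHom, Category.id_comp, hd, coprod.inr_desc]

lemma aux_smul_sup_le [∀ X : A, PreservesFiniteColimits (tensorLeft X)]
    (a : Subobject (𝟙_ A)) (k : ℕ) {M : A} (K₁ K₂ : Subobject M) :
    idealSMul a k (K₁ ⊔ K₂) ≤ idealSMul a k K₁ ⊔ idealSMul a k K₂ := by
  simp only [idealSMul]
  exact aux_image_sup_le (idealPow a k).arrow K₁ K₂

lemma aux_smul_mk_comp (a : Subobject (𝟙_ A)) {X M : A} (f : X ⟶ M) [Mono f] (k : ℕ)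
    (K : Subobject X) (h : idealSMul a k K = ⊥) :
    idealSMul a k (Subobject.mk (K.arrow ≫ f)) = ⊥ := by
  rw [aux_smul_eq_bot_iff] at h ⊢
  have h1 : (Subobject.mk (K.arrow ≫ f)).arrow
      = (Subobject.underlyingIso (K.arrow ≫ f)).hom ≫ (K.arrow ≫ f) :=
    (Subobject.underlyingIso_hom_comp_eq_mk _).symm
  rw [h1]
  have h2 : ((idealPow a k).arrow ⊗ₘ
        ((Subobject.underlyingIso (K.arrow ≫ f)).hom ≫ (K.arrow ≫ f)))
      = (𝟙 _ ⊗ₘ (Subobject.underlyingIso (K.arrow ≫ f)).hom) ≫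
          ((idealPow a k).arrow ⊗ₘ (K.arrow ≫ f)) := by
    rw [tensorHom_comp_tensorHom, Category.id_comp]
  have h3 : ((idealPow a k).arrow ⊗ₘ (K.arrow ≫ f)) ≫ (λ_ M).hom
      = (((idealPow a k).arrow ⊗ₘ K.arrow) ≫ (λ_ X).hom) ≫ f := by
    rw [Category.assoc, ← MonoidalCategory.leftUnitor_naturality,
      ← MonoidalCategory.id_tensorHom, ← Category.assoc, tensorHom_comp_tensorHom, Category.comp_id]
  rw [h2, Category.assoc, h3, h, zero_comp, comp_zero]

lemma aux_isZero_of_top_eq_bot {X : A} (h : (⊤ : Subobject X) = ⊥) : IsZero X := by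
  have h1 : (⊤ : Subobject X).arrow = 0 := by
    rw [← Subobject.ofLE_arrow (le_of_eq h), Subobject.bot_arrow, comp_zero]
  haveI : Mono (0 : ((⊤ : Subobject X) : A) ⟶ X) := by rw [← h1]; infer_instance
  have hz : IsZero ((⊤ : Subobject X) : A) := IsZero.of_mono_zero _ X
  exact IsZero.of_iso hz (asIso (⊤ : Subobject X).arrow).symm

end AuxLemmas

noncomputable instance aux_subobjectCompleteLattice (M : A) : CompleteLattice (Subobject M) :=
  Subobject.instCompleteLattice.{v} (B := M)

theorem statement12
    -- the monoidal structure is symmetric with right exact tensor product in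
    -- each variable:
    [SymmetricCategory A]
    [∀ X : A, PreservesFiniteColimits (tensorLeft X)]
    [∀ X : A, PreservesFiniteColimits (tensorRight X)]
    -- `A` is Grothendieck abelian:
    [AB5 A] [HasSeparator A]
    -- `A` is locally noetherian:
    (hLN : ∀ M : A,
      (⨆ (N : Subobject M) (_ : IsNoetherianObject (N : A)), N) = (⊤ : Subobject M))
    -- the ideal `a ⊆ 𝟙`:
    (a : Subobject (𝟙_ A))
    -- the Artin–Rees condition (∗∗):
    (hAR : ∀ M : A, IsNoetherianObject M → ∀ N : Subobject M, ∃ r : ℕ,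
      ∀ n : ℕ, r ≤ n →
        idealSMul a n (⊤ : Subobject M) ⊓ N =
          idealSMul a (n - r) (idealSMul a r (⊤ : Subobject M) ⊓ N)) :
    -- conclusion: condition (∗) holds for `B`:
    ∀ M : A, IsNoetherianObject M → ∃ M₀ : Subobject M,
      locallyTorsion a (cokernel M₀.arrow) ∧
      ∀ N : Subobject (M₀ : A), locallyTorsion a ((N : A)) → IsZero ((N : A)) := by
  intro M hM
  classical
  -- the set of torsion subobjects of `M`
  set S : Set (Subobject M) := {N | ∃ k : ℕ, idealSMul a k N = ⊥} with hS
  have hbot : (⊥ : Subobject M) ∈ S := ⟨0, aux_smul_bot a 0 M⟩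
  obtain ⟨t, htS, hmax⟩ :=
    (show WellFounded ((· > ·) : Subobject M → Subobject M → Prop) from by haveI := hM; exact wellFounded_gt).has_min S ⟨⊥, hbot⟩
  -- every torsion subobject is below `t`
  have hSle : ∀ P ∈ S, P ≤ t := by
    intro P hP
    obtain ⟨k₁, hk₁⟩ := htS
    obtain ⟨k₂, hk₂⟩ := hP
    have hsup : t ⊔ P ∈ S := by
      refine ⟨max k₁ k₂, le_bot_iff.mp ?_⟩
      refine le_trans (aux_smul_sup_le a _ t P) (sup_le ?_ ?_)
      · exact le_trans
          (aux_smul_mono_left a (aux_pow_antitone a k₁ _ (le_max_left _ _)) t)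
          (le_of_eq hk₁)
      · exact le_trans
          (aux_smul_mono_left a (aux_pow_antitone a k₂ _ (le_max_right _ _)) P)
          (le_of_eq hk₂)
    have h1 : ¬ t < t ⊔ P := hmax _ hsup
    have h2 : t ⊔ P = t := by
      rcases (le_sup_left : t ≤ t ⊔ P).lt_or_eq with h | h
      · exact absurd h h1
      · exact h.symm
    calc P ≤ t ⊔ P := le_sup_right
      _ = t := h2
  obtain ⟨kt, hkt⟩ := htS
  obtain ⟨r, hr⟩ := hAR M hM t
  have hARs := hr (r + kt) (Nat.le_add_right r kt)
  rw [Nat.add_sub_cancel_left] at hARs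
  set s := r + kt with hs
  set M₀ := idealSMul a s (⊤ : Subobject M) with hM₀
  have hM₀t : M₀ ⊓ t = ⊥ := by
    refine le_bot_iff.mp ?_
    calc M₀ ⊓ t = idealSMul a kt (idealSMul a r (⊤ : Subobject M) ⊓ t) := hARs
      _ ≤ idealSMul a kt t := aux_smul_mono_right a kt inf_le_right
      _ ≤ ⊥ := le_of_eq hkt
  refine ⟨M₀, ?_, ?_⟩
  · -- the quotient is annihilated by `a^s`
    have hQ : idealSMul a s (⊤ : Subobject (cokernel M₀.arrow)) = ⊥ := by
      rw [aux_smul_eq_bot_iff]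
      set P : A := ((idealPow a s : A)) with hP
      set π : M ⟶ cokernel M₀.arrow := cokernel.π M₀.arrow with hπ
      have h1 : ((idealPow a s).arrow ⊗ₘ (⊤ : Subobject (cokernel M₀.arrow)).arrow)
          = (𝟙 P ⊗ₘ (⊤ : Subobject (cokernel M₀.arrow)).arrow) ≫
              ((idealPow a s).arrow ⊗ₘ 𝟙 (cokernel M₀.arrow)) := by
        rw [tensorHom_comp_tensorHom, Category.id_comp, Category.comp_id]
      suffices h2 : ((idealPow a s).arrow ⊗ₘ 𝟙 (cokernel M₀.arrow)) ≫
          (λ_ (cokernel M₀.arrow)).hom = 0 by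
        rw [h1, Category.assoc, h2, comp_zero]
      haveI : Epi (𝟙 P ⊗ₘ π) := by
        rw [MonoidalCategory.id_tensorHom]
        exact (tensorLeft P).map_epi π
      rw [← cancel_epi (𝟙 P ⊗ₘ π), comp_zero]
      have h3 : (𝟙 P ⊗ₘ π) ≫ ((idealPow a s).arrow ⊗ₘ 𝟙 (cokernel M₀.arrow))
          = ((idealPow a s).arrow ⊗ₘ 𝟙 M) ≫ (𝟙 (𝟙_ A) ⊗ₘ π) := by
        rw [tensorHom_comp_tensorHom, tensorHom_comp_tensorHom, Category.id_comp, Category.comp_id,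
          Category.id_comp, Category.comp_id]
      rw [← Category.assoc, h3, Category.assoc, MonoidalCategory.id_tensorHom,
        MonoidalCategory.leftUnitor_naturality, ← Category.assoc]
      have h4 : ((idealPow a s).arrow ⊗ₘ 𝟙 M) ≫ (λ_ M).hom
          = (𝟙 P ⊗ₘ inv (⊤ : Subobject M).arrow) ≫
              (((idealPow a s).arrow ⊗ₘ (⊤ : Subobject M).arrow) ≫ (λ_ M).hom) := by
        rw [← Category.assoc, tensorHom_comp_tensorHom, Category.id_comp, IsIso.inv_hom_id]
      rw [h4]
      have h5 : (((idealPow a s).arrow ⊗ₘ (⊤ : Subobject M).arrow) ≫ (λ_ M).hom) ≫ π = 0 := by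
        rw [← imageSubobject_arrow_comp (((idealPow a s).arrow ⊗ₘ (⊤ : Subobject M).arrow) ≫
          (λ_ M).hom), Category.assoc]
        have h6 : (imageSubobject (((idealPow a s).arrow ⊗ₘ (⊤ : Subobject M).arrow) ≫
            (λ_ M).hom)).arrow ≫ π = 0 := cokernel.condition M₀.arrow
        rw [h6, comp_zero]
      rw [Category.assoc, h5, comp_zero]
    simp only [locallyTorsion]
    refine le_antisymm le_top ?_
    exact le_iSup_of_le ⊤ (le_iSup_of_le ⟨s, hQ⟩ le_rfl)
  · -- `M₀` has no nonzero locally torsion subobject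
    intro N hN
    simp only [locallyTorsion] at hN
    have hcl : ∀ N' : Subobject ((N : A)),
        (∃ k : ℕ, idealSMul a k N' = ⊥) → N' = ⊥ := by
      rintro N' ⟨k, hk⟩
      haveI : Mono (N.arrow ≫ M₀.arrow) := mono_comp _ _
      have hP : idealSMul a k (Subobject.mk (N'.arrow ≫ (N.arrow ≫ M₀.arrow))) = ⊥ := by
        have := aux_smul_mk_comp a (N.arrow ≫ M₀.arrow) k N' hk
        exact this
      have hPM₀ : Subobject.mk (N'.arrow ≫ (N.arrow ≫ M₀.arrow)) ≤ M₀ := by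
        conv_rhs => rw [← Subobject.mk_arrow M₀]
        exact Subobject.mk_le_mk_of_comm (N'.arrow ≫ N.arrow) (by rw [Category.assoc])
      have hPt : Subobject.mk (N'.arrow ≫ (N.arrow ≫ M₀.arrow)) ≤ t := hSle _ ⟨k, hP⟩
      have hPbot : Subobject.mk (N'.arrow ≫ (N.arrow ≫ M₀.arrow)) = ⊥ := by
        refine le_bot_iff.mp ?_
        rw [← hM₀t]
        exact le_inf hPM₀ hPt
      have harr : N'.arrow ≫ (N.arrow ≫ M₀.arrow) = 0 := by
        rw [← Subobject.underlyingIso_arrow (N'.arrow ≫ (N.arrow ≫ M₀.arrow))]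
        have : (Subobject.mk (N'.arrow ≫ (N.arrow ≫ M₀.arrow))).arrow = 0 := by
          rw [hPbot, Subobject.bot_arrow]
        rw [this, comp_zero]
      have hNarr : N'.arrow = 0 :=
        (cancel_mono (N.arrow ≫ M₀.arrow)).mp (by rw [harr, zero_comp])
      refine le_bot_iff.mp (Subobject.le_of_comm 0 ?_)
      rw [zero_comp, hNarr]
    have htop : (⊤ : Subobject ((N : A))) = ⊥ := by
      rw [← hN]
      refine le_bot_iff.mp (iSup_le fun N' => iSup_le fun h => le_of_eq (hcl N' h))
    exact aux_isZero_of_top_eq_bot htop
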